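/- The sum over all h ∈ Z^n of the number of h-increasing trees on {0,...,n} equals (n+1)^n, the number of rooted Cayley trees on {0,...,n}. -/

import Mathlib

open scoped Classical
open MeasureTheory

noncomputable section

def extv {α : Type*} [Zero α] {n : ℕ} (x : Fin n → α) : Fin (n + 1) → α :=
  Fin.cases 0 x

/-- The centroid `h̄` of `h ∈ ℤ^n`: `h̄_i = h_i + i/(n+1)`, with the convention `h_0 = 0`. -/
def cent (n : ℕ) (h : Fin n → ℤ) : Fin (n + 1) → ℝ :=
  fun i => (extv h i : ℤ) + (i : ℝ) / (n + 1)

/-- The graph `G_h` on `{0, …, n}` whose edges are the pairs `(i,j)` with `|h̄_i - h̄_j| < 1`. -/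
def Gh (n : ℕ) (h : Fin n → ℤ) : SimpleGraph (Fin (n + 1)) where
  Adj i j := i ≠ j ∧ |cent n h i - cent n h j| < 1
  symm := ⟨fun i j hij => ⟨hij.1.symm, by rw [abs_sub_comm]; exact hij.2⟩⟩
  loopless := ⟨fun i hi => hi.1 rfl⟩

/-- The key of the pair `(i, j)`: the pair `(min(h̄_i, h̄_j), max(h̄_i, h̄_j))` with the
lexicographic order, along which edges of `G_h` are ordered. -/
def keyC (n : ℕ) (h : Fin n → ℤ) (p : Fin (n + 1) × Fin (n + 1)) : ℝ ×ₗ ℝ :=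
  toLex (min (cent n h p.1) (cent n h p.2), max (cent n h p.1) (cent n h p.2))

/-- The subgraph of `G` consisting of the edges strictly greater than `e`. -/
def aboveC (n : ℕ) (h : Fin n → ℤ) (G : SimpleGraph (Fin (n + 1)))
    (e : Fin (n + 1) × Fin (n + 1)) : SimpleGraph (Fin (n + 1)) where
  Adj a b := G.Adj a b ∧ keyC n h e < keyC n h (a, b)
  symm := by
    constructor
    intro a b hab
    refine ⟨hab.1.symm, ?_⟩
    have hk : keyC n h (a, b) = keyC n h (b, a) := by
      simp only [keyC]; rw [min_comm (cent n h a), max_comm (cent n h a)]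
    rw [← hk]; exact hab.2
  loopless := ⟨fun a ha => G.loopless.irrefl a ha.1⟩

/-- An edge `e = (i, j)` of `G_h` (normalized so that `h̄_i < h̄_j`) is `(G, h)`-active if
`i` and `j` are joined by a path among the edges of `G` strictly greater than `e`. -/
def IsActiveC (n : ℕ) (h : Fin n → ℤ) (G : SimpleGraph (Fin (n + 1)))
    (e : Fin (n + 1) × Fin (n + 1)) : Prop :=
  cent n h e.1 < cent n h e.2 ∧ (Gh n h).Adj e.1 e.2 ∧ (aboveC n h G e).Reachable e.1 e.2

/-- The finset of `(G, h)`-active edges. -/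
def activeC (n : ℕ) (h : Fin n → ℤ) (G : SimpleGraph (Fin (n + 1))) :
    Finset (Fin (n + 1) × Fin (n + 1)) :=
  Finset.univ.filter (IsActiveC n h G)

/-- `G ⊕ e`: toggle the edge `e` (delete it if present, add it otherwise). -/
def toggleC {n : ℕ} (G : SimpleGraph (Fin (n + 1))) (e : Fin (n + 1) × Fin (n + 1)) :
    SimpleGraph (Fin (n + 1)) :=
  if G.Adj e.1 e.2 then G.deleteEdges {s(e.1, e.2)}
  else G ⊔ SimpleGraph.fromEdgeSet {s(e.1, e.2)}

/-- The map `Ψ_h`: toggle the least `(G, h)`-active edge, if any. -/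
def PsiH (n : ℕ) (h : Fin n → ℤ) (G : SimpleGraph (Fin (n + 1))) :
    SimpleGraph (Fin (n + 1)) :=
  if hne : (activeC n h G).Nonempty then
    toggleC G (Finset.exists_min_image (activeC n h G) (keyC n h) hne).choose
  else G

/-- The index `i_0` of the least coordinate of the centroid `h̄`. -/
def idxMin (n : ℕ) (h : Fin n → ℤ) : Fin (n + 1) :=
  (Finite.exists_min (cent n h)).choose

/-- An `h`-increasing tree on `{0, …, n}`: a spanning tree of `G_h` such that `h̄` strictly
increases along every simple path starting at the vertex `i_0` minimizing `h̄`. -/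
def IsIncTree (n : ℕ) (h : Fin n → ℤ) (T : SimpleGraph (Fin (n + 1))) : Prop :=
  T.IsTree ∧ T ≤ Gh n h ∧
    ∀ (v : Fin (n + 1)) (p : T.Walk (idxMin n h) v), p.IsPath →
      List.Chain' (fun a b => cent n h a < cent n h b) p.support

end


noncomputable section
namespace Aux
open Function Finset

section Reach
variable {α : Type*} {P : α → α} {r : α}

theorem reach_of_measure (m : α → ℕ) (hm : ∀ v, v ≠ r → m (P v) < m v) :
    ∀ v, ∃ k, P^[k] v = r := by
  have key : ∀ M v, m v ≤ M → ∃ k, P^[k] v = r := by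
    intro M
    induction M with
    | zero =>
      intro v hv
      by_cases hvr : v = r
      · exact ⟨0, hvr⟩
      · exact absurd (hm v hvr) (by omega)
    | succ M ih =>
      intro v hv
      by_cases hvr : v = r
      · exact ⟨0, hvr⟩
      · obtain ⟨k, hk⟩ := ih (P v) (by have := hm v hvr; omega)
        exact ⟨k + 1, by rwa [Function.iterate_succ_apply]⟩
  exact fun v => key (m v) v le_rfl

variable (hP : ∀ j, ∃ k, P^[k] j = r)

def dep (j : α) : ℕ := Nat.find (hP j)

theorem dep_spec (j : α) : P^[dep hP j] j = r := Nat.find_spec (hP j)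

theorem dep_min {j : α} {k : ℕ} (hk : k < dep hP j) : P^[k] j ≠ r := Nat.find_min (hP j) hk

theorem dep_eq_zero {j : α} : dep hP j = 0 ↔ j = r := by
  constructor
  · intro h
    have := dep_spec hP j
    rwa [h, Function.iterate_zero_apply] at this
  · intro h
    have : P^[0] j = r := by simpa using h
    have h2 : dep hP j ≤ 0 := Nat.find_le this
    omega

theorem dep_parent {j : α} (hj : j ≠ r) : dep hP (P j) + 1 = dep hP j := by
  have h0 : dep hP j ≠ 0 := fun h => hj ((dep_eq_zero hP).mp h)
  have h1 : P^[dep hP j - 1] (P j) = r := by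
    have := dep_spec hP j
    rwa [← Nat.succ_pred_eq_of_ne_zero h0, Function.iterate_succ_apply] at this
  have h2 : dep hP (P j) ≤ dep hP j - 1 := Nat.find_le h1
  have h3 : ¬ dep hP (P j) < dep hP j - 1 := by
    intro hlt
    have hit : P^[dep hP (P j) + 1] j = r := by
      rw [Function.iterate_succ_apply]
      exact dep_spec hP (P j)
    exact dep_min hP (k := dep hP (P j) + 1) (by omega) hit
  omega

theorem dep_iterate {b : α} : ∀ i, i ≤ dep hP b → dep hP (P^[i] b) = dep hP b - i := by
  intro i
  induction i with
  | zero => simp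
  | succ i ih =>
    intro hi
    have hdi : dep hP (P^[i] b) = dep hP b - i := ih (by omega)
    have hne : P^[i] b ≠ r := dep_min hP (k := i) (j := b) (by omega)
    have hpar : dep hP (P (P^[i] b)) + 1 = dep hP (P^[i] b) := dep_parent hP hne
    rw [Function.iterate_succ_apply']
    omega


theorem dep_le {j : α} {k : ℕ} (h : P^[k] j = r) : dep hP j ≤ k := Nat.find_le h

theorem iterate_injOn {b : α} {i j : ℕ} (hi : i ≤ dep hP b) (hj : j ≤ dep hP b)
    (hij : P^[i] b = P^[j] b) : i = j := by
  have h1 := dep_iterate hP i hi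
  have h2 := dep_iterate hP j hj
  rw [hij] at h1
  omega

include hP in
theorem lt_of_potential {c : α → ℝ} (hc : ∀ j, j ≠ r → c (P j) < c j) :
    ∀ j, j ≠ r → c r < c j := by
  have key : ∀ M j, dep hP j ≤ M → j ≠ r → c r < c j := by
    intro M
    induction M with
    | zero =>
      intro j hj hjr
      exact absurd ((dep_eq_zero hP).mp (by omega)) hjr
    | succ M ih =>
      intro j hj hjr
      by_cases hpj : P j = r
      · have := hc j hjr
        rwa [hpj] at this
      · have hpar := dep_parent hP hjr
        exact lt_trans (ih (P j) (by omega) hpj) (hc j hjr)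
  exact fun j => key (dep hP j) j le_rfl

end Reach


section Joyal
variable {N : ℕ}

/-- The finset of periodic points of `f`. -/
def Cyc (f : Fin (N+1) → Fin (N+1)) : Finset (Fin (N+1)) :=
  Finset.univ.filter fun x => ∃ k, 0 < k ∧ f^[k] x = x

lemma mem_Cyc {f : Fin (N+1) → Fin (N+1)} {x : Fin (N+1)} :
    x ∈ Cyc f ↔ ∃ k, 0 < k ∧ f^[k] x = x := by simp [Cyc]

lemma exists_iterate_cyc (f : Fin (N+1) → Fin (N+1)) (x : Fin (N+1)) :
    ∃ i, f^[i] x ∈ Cyc f := by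
  have key : ∀ a b : ℕ, a < b → f^[a] x = f^[b] x → ∃ i, f^[i] x ∈ Cyc f := by
    intro a b hab heq
    refine ⟨a, mem_Cyc.mpr ⟨b - a, by omega, ?_⟩⟩
    rw [← Function.iterate_add_apply]
    have h2 : b - a + a = b := by omega
    rw [h2, ← heq]
  obtain ⟨i, j, hne, heq⟩ := Fintype.exists_ne_map_eq_of_card_lt
    (fun i : Fin (N+2) => f^[(i : ℕ)] x) (by simp)
  have hne' : (i : ℕ) ≠ (j : ℕ) := fun h => hne (Fin.ext h)
  rcases Nat.lt_or_ge (i : ℕ) (j : ℕ) with hij | hij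
  · exact key i j hij heq
  · exact key j i (by omega) heq.symm

lemma Cyc_nonempty (f : Fin (N+1) → Fin (N+1)) : (Cyc f).Nonempty := by
  obtain ⟨i, hi⟩ := exists_iterate_cyc f 0
  exact ⟨_, hi⟩

lemma Cyc_apply_mem {f : Fin (N+1) → Fin (N+1)} {x : Fin (N+1)} (hx : x ∈ Cyc f) :
    f x ∈ Cyc f := by
  rw [mem_Cyc] at hx ⊢
  obtain ⟨k, hk, hfk⟩ := hx
  refine ⟨k, hk, ?_⟩
  rw [← Function.iterate_succ_apply, Function.iterate_succ_apply', hfk]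

lemma iterate_mem_Cyc {f : Fin (N+1) → Fin (N+1)} {x : Fin (N+1)} (hx : x ∈ Cyc f) (i : ℕ) :
    f^[i] x ∈ Cyc f := by
  induction i with
  | zero => simpa using hx
  | succ i ih => rw [Function.iterate_succ_apply']; exact Cyc_apply_mem ih

lemma injOn_Cyc {f : Fin (N+1) → Fin (N+1)} {x y : Fin (N+1)} (hx : x ∈ Cyc f) (hy : y ∈ Cyc f)
    (hxy : f x = f y) : x = y := by
  rw [mem_Cyc] at hx hy
  obtain ⟨k, hk, hfk⟩ := hx
  obtain ⟨l, hl, hfl⟩ := hy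
  have hx' : f^[k * l] x = x := by
    rw [Function.iterate_mul]; exact Function.iterate_fixed hfk l
  have hy' : f^[k * l] y = y := by
    rw [mul_comm, Function.iterate_mul]; exact Function.iterate_fixed hfl k
  obtain ⟨K, hK⟩ : ∃ K, k * l = K + 1 := by
    have : 1 ≤ k * l := Nat.one_le_iff_ne_zero.mpr (by positivity)
    exact ⟨k * l - 1, by omega⟩
  rw [hK] at hx' hy'
  calc x = f^[K + 1] x := hx'.symm
    _ = f^[K] (f x) := Function.iterate_succ_apply f K x
    _ = f^[K] (f y) := by rw [hxy]
    _ = y := by rw [← Function.iterate_succ_apply, hy']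

lemma surjOn_Cyc {f : Fin (N+1) → Fin (N+1)} {x : Fin (N+1)} (hx : x ∈ Cyc f) :
    ∃ y ∈ Cyc f, f y = x := by
  obtain ⟨k, hk, hfk⟩ := mem_Cyc.mp hx
  refine ⟨f^[k-1] x, iterate_mem_Cyc hx _, ?_⟩
  have h2 : f (f^[k-1] x) = f^[k-1+1] x := (Function.iterate_succ_apply' f (k-1) x).symm
  have h1 : k - 1 + 1 = k := by omega
  rw [h2, h1, hfk]

/-- canonical enumeration of a finset -/
def enum (s : Finset (Fin (N+1))) (i : ℕ) : Fin (N+1) := (s.sort (· ≤ ·)).getD i 0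

lemma enum_mem {s : Finset (Fin (N+1))} {i : ℕ} (hi : i < s.card) : enum s i ∈ s := by
  have hl : i < (s.sort (· ≤ ·)).length := by rwa [Finset.length_sort]
  rw [enum, List.getD_eq_getElem _ _ hl]
  exact (Finset.mem_sort _).mp (List.getElem_mem _)

lemma enum_inj {s : Finset (Fin (N+1))} {i j : ℕ} (hi : i < s.card) (hj : j < s.card)
    (h : enum s i = enum s j) : i = j := by
  have hli : i < (s.sort (· ≤ ·)).length := by rwa [Finset.length_sort]
  have hlj : j < (s.sort (· ≤ ·)).length := by rwa [Finset.length_sort]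
  simp only [enum] at h
  rw [List.getD_eq_getElem _ _ hli, List.getD_eq_getElem _ _ hlj] at h
  exact ((Finset.sort_nodup (s := s) (r := fun x1 x2 => x1 ≤ x2)).getElem_inj_iff).mp h

lemma enum_surj {s : Finset (Fin (N+1))} {x : Fin (N+1)} (hx : x ∈ s) :
    ∃ i, i < s.card ∧ enum s i = x := by
  have : x ∈ s.sort (· ≤ ·) := (Finset.mem_sort _).mpr hx
  obtain ⟨i, hi, he⟩ := List.mem_iff_getElem.mp this
  refine ⟨i, by rwa [Finset.length_sort] at hi, ?_⟩
  rw [enum, List.getD_eq_getElem _ _ hi, he]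

/-! ### forward map: function to rooted tree -/

variable {N : ℕ}

def sig (f : Fin (N+1) → Fin (N+1)) (i : ℕ) : Fin (N+1) := f (enum (Cyc f) i)

lemma sig_mem {f : Fin (N+1) → Fin (N+1)} {i : ℕ} (hi : i < (Cyc f).card) :
    sig f i ∈ Cyc f := Cyc_apply_mem (enum_mem hi)

lemma sig_inj {f : Fin (N+1) → Fin (N+1)} {i j : ℕ} (hi : i < (Cyc f).card)
    (hj : j < (Cyc f).card) (h : sig f i = sig f j) : i = j :=
  enum_inj hi hj (injOn_Cyc (enum_mem hi) (enum_mem hj) h)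

lemma sig_surj {f : Fin (N+1) → Fin (N+1)} {x : Fin (N+1)} (hx : x ∈ Cyc f) :
    ∃ i, i < (Cyc f).card ∧ sig f i = x := by
  obtain ⟨y, hy, hfy⟩ := surjOn_Cyc hx
  obtain ⟨i, hi, hei⟩ := enum_surj hy
  exact ⟨i, hi, by rw [sig, hei, hfy]⟩

def Pm (f : Fin (N+1) → Fin (N+1)) (x : Fin (N+1)) : Fin (N+1) :=
  if h : ∃ i, i < (Cyc f).card ∧ sig f i = x then
    (if Nat.find h + 1 < (Cyc f).card then sig f (Nat.find h + 1) else x)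
  else f x

def bm (f : Fin (N+1) → Fin (N+1)) : Fin (N+1) := sig f 0

def rm (f : Fin (N+1) → Fin (N+1)) : Fin (N+1) := sig f ((Cyc f).card - 1)

lemma Pm_of_not_mem {f : Fin (N+1) → Fin (N+1)} {x : Fin (N+1)} (hx : x ∉ Cyc f) :
    Pm f x = f x := by
  rw [Pm, dif_neg]
  rintro ⟨i, hi, he⟩
  exact hx (he ▸ sig_mem hi)

lemma Pm_sig {f : Fin (N+1) → Fin (N+1)} {i : ℕ} (hi : i < (Cyc f).card) :
    Pm f (sig f i) = if i + 1 < (Cyc f).card then sig f (i+1) else sig f i := by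
  have hex : ∃ j, j < (Cyc f).card ∧ sig f j = sig f i := ⟨i, hi, rfl⟩
  rw [Pm, dif_pos hex]
  have hfind : Nat.find hex = i := by
    have h1 := Nat.find_spec hex
    exact sig_inj h1.1 hi h1.2
  rw [hfind]

lemma Pm_rm (f : Fin (N+1) → Fin (N+1)) : Pm f (rm f) = rm f := by
  have hm : 0 < (Cyc f).card := (Cyc_nonempty f).card_pos
  rw [rm, Pm_sig (by omega), if_neg (by omega)]

lemma Pm_reach_sig (f : Fin (N+1) → Fin (N+1)) :
    ∀ j i, i < (Cyc f).card → (Cyc f).card - 1 - i = j → ∃ k, (Pm f)^[k] (sig f i) = rm f := by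
  intro j
  induction j with
  | zero =>
    intro i hi hij
    refine ⟨0, ?_⟩
    rw [Function.iterate_zero_apply, rm]
    congr 1
    omega
  | succ j ih =>
    intro i hi hij
    have h1 : i + 1 < (Cyc f).card := by omega
    obtain ⟨k, hk⟩ := ih (i+1) h1 (by omega)
    refine ⟨k+1, ?_⟩
    rw [Function.iterate_succ_apply, Pm_sig hi, if_pos h1, hk]

lemma Pm_reach (f : Fin (N+1) → Fin (N+1)) : ∀ x, ∃ k, (Pm f)^[k] x = rm f := by
  intro x
  obtain ⟨i0, hi0⟩ := exists_iterate_cyc f x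
  have hex : ∃ i, f^[i] x ∈ Cyc f := ⟨i0, hi0⟩
  have hmem : f^[Nat.find hex] x ∈ Cyc f := Nat.find_spec hex
  have hiter : ∀ j, j ≤ Nat.find hex → (Pm f)^[j] x = f^[j] x := by
    intro j
    induction j with
    | zero => simp
    | succ j ih =>
      intro hj
      have hnot : f^[j] x ∉ Cyc f := Nat.find_min hex (by omega)
      rw [Function.iterate_succ_apply', ih (by omega), Pm_of_not_mem hnot]
      exact (Function.iterate_succ_apply' f j x).symm
  obtain ⟨i', hi', hsi⟩ := sig_surj hmem
  obtain ⟨k, hk⟩ := Pm_reach_sig f _ i' hi' rfl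
  refine ⟨k + Nat.find hex, ?_⟩
  rw [Function.iterate_add_apply, hiter _ le_rfl, ← hsi, hk]

/-! ### inverse map: rooted tree with marked vertex to function -/

section Spine
variable {P : Fin (N+1) → Fin (N+1)} {r b : Fin (N+1)}
variable (hP : ∀ j, ∃ k, P^[k] j = r)

def Dsp (b : Fin (N+1)) : Finset (Fin (N+1)) :=
  (Finset.range (dep hP b + 1)).image (fun i => P^[i] b)

lemma mem_Dsp {x : Fin (N+1)} : x ∈ Dsp hP b ↔ ∃ i, i ≤ dep hP b ∧ P^[i] b = x := by
  simp [Dsp, Nat.lt_succ_iff]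

lemma card_Dsp : (Dsp hP b).card = dep hP b + 1 := by
  rw [Dsp, Finset.card_image_of_injOn, Finset.card_range]
  intro i hi j hj hij
  simp only [Finset.coe_range, Set.mem_Iio] at hi hj
  exact iterate_injOn hP (by omega) (by omega) hij

def fm (b : Fin (N+1)) (x : Fin (N+1)) : Fin (N+1) :=
  if h : ∃ i, i < (Dsp hP b).card ∧ enum (Dsp hP b) i = x then P^[Nat.find h] b else P x

lemma fm_of_not_mem {x : Fin (N+1)} (hx : x ∉ Dsp hP b) : fm hP b x = P x := by
  rw [fm, dif_neg]
  rintro ⟨i, hi, he⟩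
  exact hx (he ▸ enum_mem hi)

lemma fm_enum {i : ℕ} (hi : i < (Dsp hP b).card) :
    fm hP b (enum (Dsp hP b) i) = P^[i] b := by
  have hex : ∃ j, j < (Dsp hP b).card ∧ enum (Dsp hP b) j = enum (Dsp hP b) i := ⟨i, hi, rfl⟩
  rw [fm, dif_pos hex]
  have hfind : Nat.find hex = i := by
    have h1 := Nat.find_spec hex
    exact enum_inj h1.1 hi h1.2
  rw [hfind]

lemma fm_mem {x : Fin (N+1)} (hx : x ∈ Dsp hP b) : fm hP b x ∈ Dsp hP b := by
  obtain ⟨i, hi, he⟩ := enum_surj hx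
  rw [← he, fm_enum hP hi]
  rw [mem_Dsp]
  have := card_Dsp hP (b := b)
  exact ⟨i, by omega, rfl⟩

lemma fm_injD {x y : Fin (N+1)} (hx : x ∈ Dsp hP b) (hy : y ∈ Dsp hP b)
    (hxy : fm hP b x = fm hP b y) : x = y := by
  obtain ⟨i, hi, hei⟩ := enum_surj hx
  obtain ⟨j, hj, hej⟩ := enum_surj hy
  rw [← hei, ← hej, fm_enum hP hi, fm_enum hP hj] at hxy
  have hc := card_Dsp hP (b := b)
  have := iterate_injOn hP (i := i) (j := j) (by omega) (by omega) hxy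
  rw [← hei, ← hej, this]

lemma fm_iterate_mem {x : Fin (N+1)} (hx : x ∈ Dsp hP b) (i : ℕ) :
    (fm hP b)^[i] x ∈ Dsp hP b := by
  induction i with
  | zero => simpa using hx
  | succ i ih => rw [Function.iterate_succ_apply']; exact fm_mem hP ih

lemma fm_iterate_injD (i : ℕ) : ∀ {x y : Fin (N+1)}, x ∈ Dsp hP b → y ∈ Dsp hP b →
    (fm hP b)^[i] x = (fm hP b)^[i] y → x = y := by
  induction i with
  | zero => intro x y _ _ hxy; simpa using hxy
  | succ i ih =>
    intro x y hx hy hxy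
    rw [Function.iterate_succ_apply, Function.iterate_succ_apply] at hxy
    exact fm_injD hP hx hy (ih (fm_mem hP hx) (fm_mem hP hy) hxy)

lemma Dsp_subset_Cyc {x : Fin (N+1)} (hx : x ∈ Dsp hP b) : x ∈ Cyc (fm hP b) := by
  have key : ∀ a c : ℕ, a < c → (fm hP b)^[a] x = (fm hP b)^[c] x → x ∈ Cyc (fm hP b) := by
    intro a c hac heq
    have h1 : (fm hP b)^[a + (c - a)] x = (fm hP b)^[a] x := by
      have : a + (c - a) = c := by omega
      rw [this, heq]
    rw [Function.iterate_add_apply] at h1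
    have h2 : (fm hP b)^[c - a] x = x :=
      fm_iterate_injD hP a (fm_iterate_mem hP hx _) hx h1
    exact mem_Cyc.mpr ⟨c - a, by omega, h2⟩
  obtain ⟨i, j, hne, heq⟩ := Fintype.exists_ne_map_eq_of_card_lt
    (fun i : Fin (N+2) => (fm hP b)^[(i : ℕ)] x) (by simp)
  have hne' : (i : ℕ) ≠ (j : ℕ) := fun h => hne (Fin.ext h)
  rcases Nat.lt_or_ge (i : ℕ) (j : ℕ) with hij | hij
  · exact key i j hij heq
  · exact key j i (by omega) heq.symm

lemma r_mem_Dsp : r ∈ Dsp hP b := (mem_Dsp hP).mpr ⟨dep hP b, le_rfl, dep_spec hP b⟩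

lemma Cyc_subset_Dsp {x : Fin (N+1)} (hx : x ∈ Cyc (fm hP b)) : x ∈ Dsp hP b := by
  by_contra hxD
  obtain ⟨k, hk, hfk⟩ := mem_Cyc.mp hx
  have havoid : ∀ i, (fm hP b)^[i] x ∉ Dsp hP b := by
    intro i hiD
    have hstay : ∀ l, (fm hP b)^[l + i] x ∈ Dsp hP b := by
      intro l
      rw [Function.iterate_add_apply]
      exact fm_iterate_mem hP hiD l
    have hret : (fm hP b)^[k * (i+1)] x = x := by
      rw [Function.iterate_mul]
      exact Function.iterate_fixed hfk (i+1)
    have hge : i + 1 ≤ k * (i+1) := Nat.le_mul_of_pos_left _ hk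
    have := hstay (k * (i+1) - i)
    have heq : k * (i+1) - i + i = k * (i+1) := by omega
    rw [heq, hret] at this
    exact hxD this
  have hPs : ∀ i, (fm hP b)^[i] x = P^[i] x := by
    intro i
    induction i with
    | zero => simp
    | succ i ih =>
      rw [Function.iterate_succ_apply', ih]
      have hnot : P^[i] x ∉ Dsp hP b := ih ▸ havoid i
      rw [fm_of_not_mem hP hnot]
      exact (Function.iterate_succ_apply' P i x).symm
  have h2 := havoid (dep hP x)
  rw [hPs, dep_spec hP x] at h2
  exact h2 (r_mem_Dsp hP)

lemma Cyc_fm_eq : Cyc (fm hP b) = Dsp hP b := by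
  ext x
  exact ⟨fun h => Cyc_subset_Dsp hP h, fun h => Dsp_subset_Cyc hP h⟩

end Spine
section RoundTrip1
variable {P : Fin (N+1) → Fin (N+1)} {r b : Fin (N+1)}
variable (hP : ∀ j, ∃ k, P^[k] j = r)

lemma sig_fm {i : ℕ} (hi : i < (Dsp hP b).card) : sig (fm hP b) i = P^[i] b := by
  rw [sig, Cyc_fm_eq hP]
  exact fm_enum hP hi

lemma card_Cyc_fm : (Cyc (fm hP b)).card = dep hP b + 1 := by
  rw [Cyc_fm_eq hP, card_Dsp hP]

lemma bm_fm : bm (fm hP b) = b := by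
  have h0 : 0 < (Dsp hP b).card := by rw [card_Dsp hP]; omega
  rw [bm, sig_fm hP h0, Function.iterate_zero_apply]

lemma rm_fm : rm (fm hP b) = r := by
  have hc := card_Dsp hP (b := b)
  have h0 : (Cyc (fm hP b)).card - 1 < (Dsp hP b).card := by rw [card_Cyc_fm hP]; omega
  rw [rm, sig_fm hP h0, card_Cyc_fm hP, Nat.add_sub_cancel]
  exact dep_spec hP b

lemma Pm_fm (hr : P r = r) : Pm (fm hP b) = P := by
  funext x
  by_cases hx : x ∈ Dsp hP b
  · obtain ⟨j, hj, hej⟩ := (mem_Dsp hP).mp hx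
    have hc := card_Dsp hP (b := b)
    have hj' : j < (Dsp hP b).card := by omega
    have hx_eq : x = sig (fm hP b) j := by rw [sig_fm hP hj', hej]
    rw [hx_eq, Pm_sig (by rw [Cyc_fm_eq hP]; exact hj')]
    by_cases hjl : j + 1 < (Cyc (fm hP b)).card
    · rw [if_pos hjl, sig_fm hP (by rw [← Cyc_fm_eq hP]; exact hjl),
        sig_fm hP hj', Function.iterate_succ_apply']
    · rw [if_neg hjl, sig_fm hP hj']
      have hjd : j = dep hP b := by
        rw [card_Cyc_fm hP] at hjl
        omega
      rw [hjd, dep_spec hP b, hr]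
  · rw [Pm_of_not_mem (by rw [Cyc_fm_eq hP]; exact hx), fm_of_not_mem hP hx]

end RoundTrip1

section RoundTrip2
variable (f : Fin (N+1) → Fin (N+1))

lemma iter_Pm_sig : ∀ i, i < (Cyc f).card → (Pm f)^[i] (bm f) = sig f i := by
  intro i
  induction i with
  | zero => intro _; rw [Function.iterate_zero_apply, bm]
  | succ i ih =>
    intro hi
    rw [Function.iterate_succ_apply', ih (by omega), Pm_sig (by omega), if_pos hi]

lemma dep_bm : dep (Pm_reach f) (bm f) = (Cyc f).card - 1 := by
  have hm : 0 < (Cyc f).card := (Cyc_nonempty f).card_pos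
  have hspec : (Pm f)^[(Cyc f).card - 1] (bm f) = rm f := by
    rw [iter_Pm_sig f _ (by omega), rm]
  have h1 : dep (Pm_reach f) (bm f) ≤ (Cyc f).card - 1 := dep_le (Pm_reach f) hspec
  rcases Nat.lt_or_ge (dep (Pm_reach f) (bm f)) ((Cyc f).card - 1) with hlt | hge
  · exfalso
    have h2 := dep_spec (Pm_reach f) (bm f)
    rw [iter_Pm_sig f _ (by omega)] at h2
    have := sig_inj (f := f) (i := dep (Pm_reach f) (bm f)) (j := (Cyc f).card - 1)
      (by omega) (by omega) h2
    omega
  · omega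

lemma Dsp_eq_Cyc : Dsp (Pm_reach f) (bm f) = Cyc f := by
  have hm : 0 < (Cyc f).card := (Cyc_nonempty f).card_pos
  ext x
  rw [mem_Dsp (Pm_reach f), dep_bm f]
  constructor
  · rintro ⟨i, hi, hP⟩
    rw [iter_Pm_sig f i (by omega)] at hP
    exact hP ▸ sig_mem (by omega)
  · intro hx
    obtain ⟨i, hi, hsi⟩ := sig_surj hx
    exact ⟨i, by omega, by rw [iter_Pm_sig f i hi, hsi]⟩

lemma fm_Pm : fm (Pm_reach f) (bm f) = f := by
  funext x
  by_cases hx : x ∈ Cyc f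
  · have hxD : x ∈ Dsp (Pm_reach f) (bm f) := by rw [Dsp_eq_Cyc f]; exact hx
    obtain ⟨i, hi, hei⟩ := enum_surj hxD
    have hcard : (Dsp (Pm_reach f) (bm f)).card = (Cyc f).card := by rw [Dsp_eq_Cyc f]
    rw [← hei, fm_enum (Pm_reach f) hi, iter_Pm_sig f i (by omega), sig]
    congr 1
    rw [Dsp_eq_Cyc f]
  · have hxD : x ∉ Dsp (Pm_reach f) (bm f) := by rw [Dsp_eq_Cyc f]; exact hx
    rw [fm_of_not_mem (Pm_reach f) hxD, Pm_of_not_mem hx]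

end RoundTrip2

/-- Rooted trees on `Fin (N+1)`, encoded as parent maps. -/
def RTP (N : ℕ) : Type :=
  {q : Fin (N+1) × (Fin (N+1) → Fin (N+1)) // q.2 q.1 = q.1 ∧ ∀ j, ∃ k, q.2^[k] j = q.1}

def joyalEquiv (N : ℕ) : RTP N × Fin (N+1) ≃ (Fin (N+1) → Fin (N+1)) where
  toFun qb := fm qb.1.2.2 qb.2
  invFun f := (⟨(rm f, Pm f), Pm_rm f, Pm_reach f⟩, bm f)
  left_inv := by
    rintro ⟨⟨⟨r, P⟩, hr, hP⟩, b⟩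
    refine Prod.ext (Subtype.ext (Prod.ext ?_ ?_)) ?_
    · exact rm_fm hP
    · exact Pm_fm hP hr
    · exact bm_fm hP
  right_inv f := fm_Pm f

instance : Finite (RTP N) := by
  unfold RTP
  infer_instance

noncomputable instance : Fintype (RTP N) := Fintype.ofFinite _

theorem card_RTP (N : ℕ) : Fintype.card (RTP N) = (N+1)^N := by
  have h1 : Fintype.card (RTP N × Fin (N+1)) = Fintype.card (Fin (N+1) → Fin (N+1)) :=
    Fintype.card_congr (joyalEquiv N)
  rw [Fintype.card_prod, Fintype.card_fin, Fintype.card_fun, Fintype.card_fin] at h1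
  have h2 : (N+1)^(N+1) = (N+1)^N * (N+1) := pow_succ (N+1) N
  have h3 : Fintype.card (RTP N) * (N + 1) = (N+1)^N * (N+1) := by rw [h1, ← h2]
  exact Nat.eq_of_mul_eq_mul_right (by omega) h3

end Joyal

section Part1
variable {n : ℕ}

lemma extv_zero (h : Fin n → ℤ) : extv h 0 = 0 := rfl

lemma extv_succ (h : Fin n → ℤ) (i : Fin n) : extv h i.succ = h i := by
  simp [extv]

lemma cent_diff (h : Fin n → ℤ) (i j : Fin (n+1)) :
    cent n h i - cent n h j
      = ((extv h i - extv h j : ℤ) : ℝ) + (((i:ℕ):ℝ) - ((j:ℕ):ℝ)) / ((n:ℝ)+1) := by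
  unfold cent
  push_cast
  ring

lemma fin_le (i : Fin (n+1)) : (i:ℕ) ≤ n := Nat.lt_succ_iff.mp i.isLt

lemma comb_eq (a b M : ℝ) (hM : M ≠ 0) : a + b / M = (a * M + b) / M := by
  field_simp

/-- integer part of a window difference is forced -/
lemma int_window {d : ℤ} {x y : ℕ} (hx : x ≤ n) (hy : y ≤ n) (hxy : x ≠ y)
    (h1 : 0 < (d:ℝ) + ((x:ℝ) - (y:ℝ)) / ((n:ℝ)+1))
    (h2 : (d:ℝ) + ((x:ℝ) - (y:ℝ)) / ((n:ℝ)+1) < 1) :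
    d = if x < y then 1 else 0 := by
  have hM : (0:ℝ) < (n:ℝ)+1 := by positivity
  rw [comb_eq _ _ _ (ne_of_gt hM)] at h1 h2
  have h1' : 0 < (d:ℝ) * ((n:ℝ)+1) + ((x:ℝ) - (y:ℝ)) := by
    have := (lt_div_iff₀ hM).mp h1
    simpa using this
  have h2' : (d:ℝ) * ((n:ℝ)+1) + ((x:ℝ) - (y:ℝ)) < (n:ℝ)+1 := (div_lt_one hM).mp h2
  have hxr : ((x:ℕ):ℝ) ≤ (n:ℝ) := by exact_mod_cast hx
  have hyr : ((y:ℕ):ℝ) ≤ (n:ℝ) := by exact_mod_cast hy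
  have hx0 : (0:ℝ) ≤ ((x:ℕ):ℝ) := by positivity
  have hy0 : (0:ℝ) ≤ ((y:ℕ):ℝ) := by positivity
  by_cases hlt : x < y
  · rw [if_pos hlt]
    have hxy1 : ((x:ℕ):ℝ) + 1 ≤ ((y:ℕ):ℝ) := by exact_mod_cast hlt
    have hge : 1 ≤ d := by
      by_contra hcon
      push_neg at hcon
      have hc : (d:ℝ) ≤ 0 := by exact_mod_cast (by omega : d ≤ 0)
      nlinarith
    have hle : d ≤ 1 := by
      by_contra hcon
      push_neg at hcon
      have hc : (2:ℝ) ≤ (d:ℝ) := by exact_mod_cast (by omega : (2:ℤ) ≤ d)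
      nlinarith
    omega
  · rw [if_neg hlt]
    have hxy1 : ((y:ℕ):ℝ) + 1 ≤ ((x:ℕ):ℝ) := by
      have : y < x := by omega
      exact_mod_cast this
    have hge : 0 ≤ d := by
      by_contra hcon
      push_neg at hcon
      have hc : (d:ℝ) ≤ -1 := by exact_mod_cast (by omega : d ≤ -1)
      nlinarith
    have hle : d ≤ 0 := by
      by_contra hcon
      push_neg at hcon
      have hc : (1:ℝ) ≤ (d:ℝ) := by exact_mod_cast (by omega : (1:ℤ) ≤ d)
      nlinarith
    omega

/-- conversely, the forced integer step gives a window -/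
lemma step_window {x y : ℕ} (hx : x ≤ n) (hy : y ≤ n) (hxy : x ≠ y) :
    0 < (((if x < y then 1 else 0 : ℤ)):ℝ) + ((x:ℝ) - (y:ℝ)) / ((n:ℝ)+1)
    ∧ (((if x < y then 1 else 0 : ℤ)):ℝ) + ((x:ℝ) - (y:ℝ)) / ((n:ℝ)+1) < 1 := by
  have hM : (0:ℝ) < (n:ℝ)+1 := by positivity
  rw [comb_eq _ _ _ (ne_of_gt hM)]
  have hxr : ((x:ℕ):ℝ) ≤ (n:ℝ) := by exact_mod_cast hx
  have hyr : ((y:ℕ):ℝ) ≤ (n:ℝ) := by exact_mod_cast hy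
  have hx0 : (0:ℝ) ≤ ((x:ℕ):ℝ) := by positivity
  have hy0 : (0:ℝ) ≤ ((y:ℕ):ℝ) := by positivity
  constructor
  · rw [lt_div_iff₀ hM]
    by_cases hlt : x < y
    · rw [if_pos hlt]
      have hxy1 : ((x:ℕ):ℝ) + 1 ≤ ((y:ℕ):ℝ) := by exact_mod_cast hlt
      push_cast
      nlinarith
    · rw [if_neg hlt]
      have hxy1 : ((y:ℕ):ℝ) + 1 ≤ ((x:ℕ):ℝ) := by
        have : y < x := by omega
        exact_mod_cast this
      push_cast
      nlinarith
  · rw [div_lt_one hM]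
    by_cases hlt : x < y
    · rw [if_pos hlt]
      have hxy1 : ((x:ℕ):ℝ) + 1 ≤ ((y:ℕ):ℝ) := by exact_mod_cast hlt
      push_cast
      nlinarith
    · rw [if_neg hlt]
      push_cast
      nlinarith

lemma cent_inj (h : Fin n → ℤ) : Function.Injective (cent n h) := by
  intro i j hij
  have hd := cent_diff h i j
  rw [sub_eq_zero.mpr hij] at hd
  have hM : (0:ℝ) < (n:ℝ)+1 := by positivity
  rw [comb_eq _ _ _ (ne_of_gt hM)] at hd
  have hnum : ((extv h i - extv h j : ℤ):ℝ) * ((n:ℝ)+1) + (((i:ℕ):ℝ) - ((j:ℕ):ℝ)) = 0 := by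
    field_simp at hd
    push_cast at hd ⊢
    linarith [hd]
  have hint : (extv h i - extv h j) * ((n:ℤ)+1) = (j:ℕ) - ((i:ℕ):ℤ) := by
    have : ((extv h i - extv h j : ℤ):ℝ) * ((n:ℝ)+1) = ((j:ℕ):ℝ) - ((i:ℕ):ℝ) := by linarith
    exact_mod_cast this
  have hdvd : ((n:ℤ)+1) ∣ ((j:ℕ) - ((i:ℕ):ℤ)) := Dvd.intro_left _ hint
  have habs : |((j:ℕ) - ((i:ℕ):ℤ))| < (n:ℤ)+1 := by
    have hi := fin_le i
    have hj := fin_le j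
    rw [abs_lt]
    omega
  have := Int.eq_zero_of_abs_lt_dvd hdvd habs
  have hval : (i:ℕ) = (j:ℕ) := by omega
  exact Fin.ext hval

lemma idxMin_spec (h : Fin n → ℤ) (i : Fin (n+1)) :
    cent n h (idxMin n h) ≤ cent n h i := (Finite.exists_min (cent n h)).choose_spec i

lemma root_lt (h : Fin n → ℤ) {v : Fin (n+1)} (hv : v ≠ idxMin n h) :
    cent n h (idxMin n h) < cent n h v :=
  lt_of_le_of_ne (idxMin_spec h v) (fun e => hv (cent_inj h e).symm)

/-! ### list and walk helpers -/

lemma chain'_append_singleton {α : Type*} {R : α → α → Prop} {l : List α}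
    (hl : List.Chain' R l) (x : α) (hne : l ≠ [])
    (hR : R (l.getLast hne) x) : List.Chain' R (l ++ [x]) := by
  unfold List.Chain'
  rw [List.isChain_append]
  refine ⟨hl, List.isChain_singleton x, ?_⟩
  intro a ha b hb
  rw [List.getLast?_eq_getLast hne, Option.mem_some_iff] at ha
  simp only [List.head?_cons, Option.mem_some_iff] at hb
  rw [ha, hb] at hR
  exact hR

lemma chain'_le_getLast {α : Type*} {c : α → ℝ} {l : List α}
    (hl : List.Chain' (fun a b => c a < c b) l) {x : α} (hx : x ∈ l) (hne : l ≠ []) :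
    c x ≤ c (l.getLast hne) := by
  haveI : IsTrans α (fun a b : α => c a < c b) := ⟨fun _ _ _ hab hbd => lt_trans hab hbd⟩
  have hp : List.Pairwise (fun a b => c a < c b) l := (List.isChain_iff_pairwise).mp hl
  have hdl : l.dropLast ++ [l.getLast hne] = l := List.dropLast_append_getLast hne
  rw [← hdl] at hp hx
  rw [List.pairwise_append] at hp
  rcases List.mem_append.mp hx with hx1 | hx2
  · exact le_of_lt (hp.2.2 x hx1 _ (List.mem_singleton_self _))
  · rw [List.mem_singleton.mp hx2]

lemma walk_decomp {V' : Type*} {G : SimpleGraph V'} {a b : V'} (p : G.Walk a b)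
    (hne : ¬ p.Nil) : ∃ (u : V') (q : G.Walk a u) (e : G.Adj u b), p = q.concat e := by
  cases p with
  | nil => simp at hne
  | cons h q => exact SimpleGraph.Walk.exists_cons_eq_concat h q

lemma walk_support_getLast? {V' : Type*} {G : SimpleGraph V'} {a b : V'} (p : G.Walk a b) :
    p.support.getLast? = some b := by
  rw [List.getLast?_eq_getLast (SimpleGraph.Walk.support_ne_nil p),
    SimpleGraph.Walk.getLast_support]

lemma isPath_concat_iff {V' : Type*} {G : SimpleGraph V'} {a u b : V'} (q : G.Walk a u)
    (e : G.Adj u b) : (q.concat e).IsPath ↔ q.IsPath ∧ b ∉ q.support := by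
  rw [SimpleGraph.Walk.isPath_def, SimpleGraph.Walk.isPath_def,
    SimpleGraph.Walk.support_concat, List.nodup_append',
    List.disjoint_singleton]
  constructor
  · rintro ⟨h1, _, h3⟩
    exact ⟨h1, h3⟩
  · rintro ⟨h1, h2⟩
    exact ⟨h1, List.nodup_singleton b, h2⟩

end Part1

section Forward
open SimpleGraph
variable {n : ℕ} {h : Fin n → ℤ} {T : SimpleGraph (Fin (n+1))}

theorem exists_path_from_root (hT : IsIncTree n h T) (v : Fin (n+1)) :
    ∃ p : T.Walk (idxMin n h) v, p.IsPath := by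
  have hr := (hT.1.isConnected.preconnected (idxMin n h) v).some
  exact ⟨hr.toPath.1, hr.toPath.2⟩

theorem par_existsUnique (hT : IsIncTree n h T) {v : Fin (n+1)} (hv : v ≠ idxMin n h) :
    ∃! u, T.Adj u v ∧ cent n h u < cent n h v := by
  obtain ⟨p0, hp0⟩ := exists_path_from_root hT v
  have hnil : ¬ p0.Nil := by
    intro hn
    rw [SimpleGraph.Walk.nil_iff_support_eq] at hn
    have hm := SimpleGraph.Walk.end_mem_support p0
    rw [hn] at hm
    exact hv (List.mem_singleton.mp hm)
  obtain ⟨u, q, e, hdec⟩ := walk_decomp p0 hnil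
  have hchain := hT.2.2 v p0 hp0
  rw [hdec, SimpleGraph.Walk.support_concat] at hchain
  have hlast : cent n h u < cent n h v := by
    unfold List.Chain' at hchain
    rw [List.isChain_append] at hchain
    exact hchain.2.2 u (Option.mem_def.mpr (walk_support_getLast? q))
      v (Option.mem_def.mpr rfl)
  refine ⟨u, ⟨e, hlast⟩, ?_⟩
  rintro u' ⟨hadj', hlt'⟩
  obtain ⟨q', hq'⟩ := exists_path_from_root hT u'
  have hvnot : v ∉ q'.support := by
    intro hvin
    have hchain' := hT.2.2 u' q' hq'
    have hle := chain'_le_getLast hchain' hvin (SimpleGraph.Walk.support_ne_nil q')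
    rw [SimpleGraph.Walk.getLast_support] at hle
    exact absurd (lt_of_le_of_lt hle hlt') (lt_irrefl _)
  have hp2 : (q'.concat hadj').IsPath := (isPath_concat_iff q' hadj').mpr ⟨hq', hvnot⟩
  obtain ⟨pp, hpp, hup⟩ := hT.1.existsUnique_path (idxMin n h) v
  have heq : q'.concat hadj' = p0 := (hup _ hp2).trans (hup _ hp0).symm
  rw [hdec] at heq
  have hsup : q'.support ++ [v] = q.support ++ [v] := by
    have h2 := congrArg SimpleGraph.Walk.support heq
    rwa [SimpleGraph.Walk.support_concat, SimpleGraph.Walk.support_concat] at h2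
  have hsup' : q'.support = q.support := List.append_cancel_right hsup
  have h1 := walk_support_getLast? q'
  rw [hsup', walk_support_getLast? q] at h1
  exact (Option.some.inj h1).symm

def parF (hT : IsIncTree n h T) : Fin (n+1) → Fin (n+1) :=
  fun v => if hv : v = idxMin n h then v else (par_existsUnique hT hv).exists.choose

lemma parF_root (hT : IsIncTree n h T) : parF hT (idxMin n h) = idxMin n h := dif_pos rfl

lemma parF_spec (hT : IsIncTree n h T) {v : Fin (n+1)} (hv : v ≠ idxMin n h) :
    T.Adj (parF hT v) v ∧ cent n h (parF hT v) < cent n h v := by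
  rw [parF, dif_neg hv]
  exact (par_existsUnique hT hv).exists.choose_spec

lemma parF_unique (hT : IsIncTree n h T) {v u : Fin (n+1)} (hv : v ≠ idxMin n h)
    (hu : T.Adj u v ∧ cent n h u < cent n h v) : u = parF hT v := by
  rw [parF, dif_neg hv]
  exact (par_existsUnique hT hv).unique hu
    ((par_existsUnique hT hv).exists.choose_spec)

lemma parF_reach (hT : IsIncTree n h T) : ∀ v, ∃ k, (parF hT)^[k] v = idxMin n h := by
  apply reach_of_measure (fun v => (Finset.univ.filter
    (fun w => cent n h w < cent n h v)).card)
  intro v hv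
  apply Finset.card_lt_card
  constructor
  · intro w hw
    simp only [Finset.mem_filter, Finset.mem_univ, true_and] at hw ⊢
    exact lt_trans hw (parF_spec hT hv).2
  · intro hsub
    have hmem : parF hT v ∈ Finset.univ.filter (fun w => cent n h w < cent n h v) := by
      simp only [Finset.mem_filter, Finset.mem_univ, true_and]
      exact (parF_spec hT hv).2
    have := hsub hmem
    simp only [Finset.mem_filter, Finset.mem_univ, true_and] at this
    exact absurd this (lt_irrefl _)

lemma adj_iff (hT : IsIncTree n h T) {a b : Fin (n+1)} :
    T.Adj a b ↔ ((a = parF hT b ∧ b ≠ idxMin n h) ∨ (b = parF hT a ∧ a ≠ idxMin n h)) := by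
  constructor
  · intro hab
    rcases lt_trichotomy (cent n h a) (cent n h b) with hlt | heq | hgt
    · left
      have hbr : b ≠ idxMin n h := by
        intro hbr
        have := idxMin_spec h a
        rw [← hbr] at this
        exact absurd (lt_of_le_of_lt this hlt) (lt_irrefl _)
      exact ⟨parF_unique hT hbr ⟨hab, hlt⟩, hbr⟩
    · exact absurd (cent_inj h heq) hab.ne
    · right
      have har : a ≠ idxMin n h := by
        intro har
        have := idxMin_spec h b
        rw [← har] at this
        exact absurd (lt_of_le_of_lt this hgt) (lt_irrefl _)
      exact ⟨parF_unique hT har ⟨hab.symm, hgt⟩, har⟩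
  · rintro (⟨ha, hbr⟩ | ⟨hb, har⟩)
    · rw [ha]
      exact (parF_spec hT hbr).1
    · rw [hb]
      exact ((parF_spec hT har).1).symm

lemma fin_val_ne {a b : Fin (n+1)} (hab : a ≠ b) : (a:ℕ) ≠ (b:ℕ) :=
  fun hh => hab (Fin.ext hh)

lemma h_step (hT : IsIncTree n h T) {v : Fin (n+1)} (hv : v ≠ idxMin n h) :
    extv h v - extv h (parF hT v) = if (v:ℕ) < ((parF hT v):ℕ) then 1 else 0 := by
  obtain ⟨hadj, hlt⟩ := parF_spec hT hv
  have hGh : (Gh n h).Adj (parF hT v) v := hT.2.1 hadj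
  have habs := And.right hGh
  rw [abs_lt] at habs
  have h1 : 0 < cent n h v - cent n h (parF hT v) := sub_pos.mpr hlt
  have h2 : cent n h v - cent n h (parF hT v) < 1 := by linarith [habs.1]
  rw [cent_diff] at h1 h2
  exact int_window (fin_le v) (fin_le _) (fin_val_ne (hadj.ne')) h1 h2

end Forward

section Construct
open SimpleGraph
variable {n : ℕ} {r : Fin (n+1)} {P : Fin (n+1) → Fin (n+1)}
variable (hreach : ∀ j, ∃ k, P^[k] j = r)

include hreach in
lemma P_ne_self {v : Fin (n+1)} (hv : v ≠ r) : P v ≠ v := by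
  intro he
  have hd := dep_parent hreach hv
  rw [he] at hd
  omega

def aInt (v : Fin (n+1)) : ℤ :=
  ∑ i ∈ Finset.range (dep hreach v),
    (if ((P^[i] v : Fin (n+1)):ℕ) < ((P^[i+1] v : Fin (n+1)):ℕ) then 1 else 0)

lemma aInt_root : aInt hreach r = 0 := by
  rw [aInt, (dep_eq_zero hreach).mpr rfl]
  simp

lemma aInt_step {v : Fin (n+1)} (hv : v ≠ r) :
    aInt hreach v = (if (v:ℕ) < ((P v):ℕ) then 1 else 0) + aInt hreach (P v) := by
  have hd := dep_parent hreach hv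
  rw [aInt, ← hd, Finset.sum_range_succ']
  have h1 : (if ((P^[0] v : Fin (n+1)):ℕ) < ((P^[0+1] v : Fin (n+1)):ℕ) then (1:ℤ) else 0)
      = if (v:ℕ) < ((P v):ℕ) then 1 else 0 := by
    simp
  have h2 : (∑ i ∈ Finset.range (dep hreach (P v)),
      if ((P^[i+1] v : Fin (n+1)):ℕ) < ((P^[i+1+1] v : Fin (n+1)):ℕ) then (1:ℤ) else 0)
      = aInt hreach (P v) := by
    rw [aInt]
    apply Finset.sum_congr rfl
    intro i _
    have e1 : P^[i+1] v = P^[i] (P v) := Function.iterate_succ_apply P i v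
    have e2 : P^[i+1+1] v = P^[i+1] (P v) := Function.iterate_succ_apply P (i+1) v
    rw [e1, e2]
  rw [h1, h2, add_comm]

def hC : Fin n → ℤ := fun i => aInt hreach i.succ - aInt hreach 0

lemma extv_hC : ∀ v, extv (hC hreach) v = aInt hreach v - aInt hreach 0 := by
  intro v
  induction v using Fin.cases with
  | zero => rw [extv_zero]; ring
  | succ i => rw [extv_succ]; rfl

lemma cent_hC_diff (v w : Fin (n+1)) :
    cent n (hC hreach) v - cent n (hC hreach) w
      = ((aInt hreach v - aInt hreach w : ℤ):ℝ) + (((v:ℕ):ℝ) - ((w:ℕ):ℝ)) / ((n:ℝ)+1) := by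
  rw [cent_diff, extv_hC, extv_hC]
  push_cast
  ring

lemma window {v : Fin (n+1)} (hv : v ≠ r) :
    0 < cent n (hC hreach) v - cent n (hC hreach) (P v)
    ∧ cent n (hC hreach) v - cent n (hC hreach) (P v) < 1 := by
  have hstep : aInt hreach v - aInt hreach (P v) = if (v:ℕ) < ((P v):ℕ) then 1 else 0 := by
    have := aInt_step hreach hv
    omega
  rw [cent_hC_diff, hstep]
  exact step_window (fin_le v) (fin_le _) (fin_val_ne (P_ne_self hreach hv).symm)

lemma cent_parent_lt {v : Fin (n+1)} (hv : v ≠ r) :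
    cent n (hC hreach) (P v) < cent n (hC hreach) v := by
  have := (window hreach hv).1
  linarith

lemma root_min : ∀ v, v ≠ r → cent n (hC hreach) r < cent n (hC hreach) v :=
  lt_of_potential hreach (fun j hj => cent_parent_lt hreach hj)

lemma idx_eq : idxMin n (hC hreach) = r := by
  by_contra hne
  have h1 := root_min hreach _ hne
  have h2 := idxMin_spec (hC hreach) r
  linarith

def TC (r : Fin (n+1)) (P : Fin (n+1) → Fin (n+1)) : SimpleGraph (Fin (n+1)) :=
  SimpleGraph.fromEdgeSet {e | ∃ v, v ≠ r ∧ e = s(v, P v)}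

include hreach in
lemma TC_adj {a b : Fin (n+1)} :
    (TC r P).Adj a b ↔ ((a = P b ∧ b ≠ r) ∨ (b = P a ∧ a ≠ r)) := by
  rw [TC, SimpleGraph.fromEdgeSet_adj]
  constructor
  · rintro ⟨⟨v, hvr, he⟩, hne⟩
    rw [Sym2.eq_iff] at he
    rcases he with ⟨ha, hb⟩ | ⟨ha, hb⟩
    · subst ha
      exact Or.inr ⟨hb, hvr⟩
    · subst hb
      exact Or.inl ⟨ha, hvr⟩
  · rintro (⟨ha, hbr⟩ | ⟨hb, har⟩)
    · refine ⟨⟨b, hbr, ?_⟩, ?_⟩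
      · rw [ha]
        exact Sym2.eq_swap
      · rw [ha]
        exact P_ne_self hreach hbr
    · refine ⟨⟨a, har, ?_⟩, ?_⟩
      · rw [hb]
      · rw [hb]
        exact (P_ne_self hreach har).symm

lemma TC_le_Gh : TC r P ≤ Gh n (hC hreach) := by
  intro a b hab
  rcases (TC_adj hreach).mp hab with ⟨ha, hbr⟩ | ⟨hb, har⟩
  · refine And.intro hab.ne ?_
    obtain ⟨h1, h2⟩ := window hreach hbr
    rw [ha, abs_lt]
    constructor <;> linarith
  · refine And.intro hab.ne ?_
    obtain ⟨h1, h2⟩ := window hreach har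
    rw [hb, abs_lt]
    constructor <;> linarith

include hreach in
lemma TC_reach : ∀ v, (TC r P).Reachable r v := by
  have key : ∀ M v, dep hreach v ≤ M → (TC r P).Reachable r v := by
    intro M
    induction M with
    | zero =>
      intro v hv
      have hv0 : v = r := (dep_eq_zero hreach).mp (by omega)
      rw [hv0]
    | succ M ih =>
      intro v hv
      by_cases hvr : v = r
      · rw [hvr]
      · have hadj : (TC r P).Adj (P v) v := (TC_adj hreach).mpr (Or.inl ⟨rfl, hvr⟩)
        have hd := dep_parent hreach hvr
        exact (ih (P v) (by omega)).trans hadj.reachable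
  exact fun v => key (dep hreach v) v le_rfl

include hreach in
lemma TC_connected : (TC r P).Connected := by
  rw [SimpleGraph.connected_iff]
  exact ⟨fun u v => ((TC_reach hreach u).symm.trans (TC_reach hreach v)), ⟨r⟩⟩

include hreach in
lemma TC_acyclic : (TC r P).IsAcyclic := by
  intro v0 cyc hcyc
  have hsupne : cyc.support.toFinset.Nonempty :=
    ⟨v0, List.mem_toFinset.mpr (Walk.start_mem_support cyc)⟩
  obtain ⟨w, hw, hwmax⟩ := Finset.exists_max_image cyc.support.toFinset
    (fun x => cent n (hC hreach) x) hsupne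
  rw [List.mem_toFinset] at hw
  set cyc' := cyc.rotate w hw with hcyc'def
  have hcyc2 : cyc'.IsCycle := hcyc.rotate hw
  have hmax' : ∀ x ∈ cyc'.support, cent n (hC hreach) x ≤ cent n (hC hreach) w := by
    intro x hx
    rw [Walk.support_eq_cons] at hx
    rcases List.mem_cons.mp hx with rfl | hx'
    · exact le_refl _
    · have hrot := Walk.support_rotate cyc w hw
      have hx2 : x ∈ cyc.support.tail := hrot.mem_iff.mp hx'
      have hx3 : x ∈ cyc.support := by
        rw [Walk.support_eq_cons]
        exact List.mem_cons_of_mem _ hx2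
      exact hwmax x (List.mem_toFinset.mpr hx3)
  have hlen := hcyc2.three_le_length
  have hnil2 : ¬ cyc'.Nil := by
    rw [Walk.not_nil_iff_lt_length]
    omega
  obtain ⟨x, e, q, hq⟩ := Walk.not_nil_iff.mp hnil2
  have hqlen : cyc'.length = q.length + 1 := by rw [hq, Walk.length_cons]
  have hqnil : ¬ q.Nil := by
    rw [Walk.not_nil_iff_lt_length]
    omega
  obtain ⟨y, q2, e2, hq2⟩ := walk_decomp q hqnil
  have hedges : cyc'.edges = s(w, x) :: (q2.edges ++ [s(y, w)]) := by
    rw [hq, Walk.edges_cons, hq2, Walk.edges_concat, List.concat_eq_append]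
  have hnd : cyc'.edges.Nodup := hcyc2.isCircuit.isTrail.edges_nodup
  rw [hedges] at hnd
  have hne_edge : s(w, x) ≠ s(y, w) := by
    intro hcontra
    have h1 := (List.nodup_cons.mp hnd).1
    exact h1 (by rw [hcontra]; exact List.mem_append_right _ (List.mem_singleton_self _))
  have hxmem : x ∈ cyc'.support := by
    rw [hq, Walk.support_cons]
    exact List.mem_cons_of_mem _ (Walk.start_mem_support q)
  have hymem : y ∈ cyc'.support := by
    rw [hq, Walk.support_cons]
    refine List.mem_cons_of_mem _ ?_
    rw [hq2, Walk.support_concat]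
    exact List.mem_append_left _ (Walk.end_mem_support q2)
  have hxw : x ≠ w := fun hh => e.ne (hh ▸ rfl)
  have hyw : y ≠ w := e2.ne
  have hcx : cent n (hC hreach) x < cent n (hC hreach) w :=
    lt_of_le_of_ne (hmax' x hxmem) (fun hh => hxw (cent_inj _ hh))
  have hcy : cent n (hC hreach) y < cent n (hC hreach) w :=
    lt_of_le_of_ne (hmax' y hymem) (fun hh => hyw (cent_inj _ hh))
  have hx_eq : x = P w := by
    rcases (TC_adj hreach).mp e with ⟨hwp, hxr⟩ | ⟨hxp, hwr⟩
    · exfalso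
      have := cent_parent_lt hreach hxr
      rw [← hwp] at this
      linarith
    · exact hxp
  have hy_eq : y = P w := by
    rcases (TC_adj hreach).mp e2 with ⟨hyp, hwr⟩ | ⟨hwp, hyr⟩
    · exact hyp
    · exfalso
      have := cent_parent_lt hreach hyr
      rw [← hwp] at this
      linarith
  apply hne_edge
  rw [hx_eq, hy_eq]
  exact Sym2.eq_swap.symm

lemma TC_chain : ∀ (v : Fin (n+1)) (p : (TC r P).Walk r v), p.IsPath →
    List.Chain' (fun a b => cent n (hC hreach) a < cent n (hC hreach) b) p.support
    ∧ (v ≠ r → P v ∈ p.support) := by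
  have key : ∀ (L : ℕ) (v : Fin (n+1)) (p : (TC r P).Walk r v), p.IsPath → p.length ≤ L →
      List.Chain' (fun a b => cent n (hC hreach) a < cent n (hC hreach) b) p.support
      ∧ (v ≠ r → P v ∈ p.support) := by
    intro L
    induction L with
    | zero =>
      intro v p hp hl
      have hnil : p.Nil := Walk.nil_iff_length_eq.mpr (by omega)
      have hsup : p.support = [r] := Walk.nil_iff_support_eq.mp hnil
      constructor
      · rw [hsup]
        exact List.isChain_singleton r
      · intro hv
        exfalso
        have := Walk.end_mem_support p
        rw [hsup] at this
        exact hv (List.mem_singleton.mp this)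
    | succ L ih =>
      intro v p hp hl
      by_cases hnil : p.Nil
      · have hsup : p.support = [r] := Walk.nil_iff_support_eq.mp hnil
        constructor
        · rw [hsup]
          exact List.isChain_singleton r
        · intro hv
          exfalso
          have := Walk.end_mem_support p
          rw [hsup] at this
          exact hv (List.mem_singleton.mp this)
      · obtain ⟨u, q, e, rfl⟩ := walk_decomp p hnil
        have hqp := (isPath_concat_iff q e).mp hp
        have hql : q.length ≤ L := by
          have := Walk.length_concat q e
          omega
        obtain ⟨hchainq, hPmem⟩ := ih u q hqp.1 hql
        rcases (TC_adj hreach).mp e with ⟨hu, hvr⟩ | ⟨hv2, hur⟩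
        · constructor
          · rw [Walk.support_concat]
            apply chain'_append_singleton hchainq v (Walk.support_ne_nil q)
            rw [Walk.getLast_support, hu]
            exact cent_parent_lt hreach hvr
          · intro _
            rw [Walk.support_concat]
            refine List.mem_append_left _ ?_
            rw [← hu]
            exact Walk.end_mem_support q
        · exfalso
          have hmem := hPmem hur
          rw [← hv2] at hmem
          exact hqp.2 hmem
  intro v p hp
  exact key p.length v p hp le_rfl

theorem TC_isIncTree : IsIncTree n (hC hreach) (TC r P) := by
  refine ⟨⟨TC_connected hreach, TC_acyclic hreach⟩, TC_le_Gh hreach, ?_⟩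
  have hidx := idx_eq hreach
  intro v p hp
  -- p : walk from idxMin n (hC hreach); rewrite the root
  revert p
  rw [hidx]
  intro p hp
  exact (TC_chain hreach v p hp).1

end Construct

section Assemble
open SimpleGraph
variable {n : ℕ}

theorem const_of_step {α : Type*} {P : α → α} {r : α} (hP : ∀ j, ∃ k, P^[k] j = r)
    {g : α → ℤ} (hg : ∀ j, j ≠ r → g j = g (P j)) : ∀ j, g j = g r := by
  have key : ∀ M j, dep hP j ≤ M → g j = g r := by
    intro M
    induction M with
    | zero =>
      intro j hj
      have h0 : j = r := (dep_eq_zero hP).mp (by omega)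
      rw [h0]
    | succ M ih =>
      intro j hj
      by_cases hjr : j = r
      · rw [hjr]
      · have hd := dep_parent hP hjr
        rw [hg j hjr]
        exact ih (P j) (by omega)
  exact fun j => key (dep hP j) j le_rfl

def IncSig (n : ℕ) := Σ h : Fin n → ℤ, {T : SimpleGraph (Fin (n+1)) // IsIncTree n h T}

def toRTP : IncSig n → RTP n :=
  fun x => ⟨(idxMin n x.1, parF x.2.2), parF_root x.2.2, parF_reach x.2.2⟩

theorem toRTP_inj : Function.Injective (toRTP (n := n)) := by
  rintro ⟨h1, T1, hT1⟩ ⟨h2, T2, hT2⟩ heq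
  have hpair := congrArg Subtype.val heq
  have hr : idxMin n h1 = idxMin n h2 := congrArg Prod.fst hpair
  have hp : parF hT1 = parF hT2 := congrArg Prod.snd hpair
  have hg : ∀ v, extv h1 v - extv h2 v = extv h1 (idxMin n h1) - extv h2 (idxMin n h1) := by
    apply const_of_step (parF_reach hT1)
    intro v hv
    have e1 := h_step hT1 hv
    have hv2 : v ≠ idxMin n h2 := by rwa [← hr]
    have e2 := h_step hT2 hv2
    rw [← hp] at e2
    omega
  have hall : ∀ v, extv h1 v = extv h2 v := by
    intro v
    have hgv := hg v
    have hg0 := hg (0 : Fin (n+1))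
    rw [extv_zero, extv_zero] at hg0
    omega
  have hh : h1 = h2 := by
    funext i
    have := hall i.succ
    rwa [extv_succ, extv_succ] at this
  subst hh
  have hTT : T1 = T2 := by
    ext a b
    rw [adj_iff hT1, adj_iff hT2, hp]
  subst hTT
  rfl

theorem toRTP_surj : Function.Surjective (toRTP (n := n)) := by
  rintro ⟨⟨r, P⟩, hfix, hreach⟩
  refine ⟨⟨hC hreach, ⟨TC r P, TC_isIncTree hreach⟩⟩, ?_⟩
  have hidx : idxMin n (hC hreach) = r := idx_eq hreach
  apply Subtype.ext
  refine Prod.ext hidx ?_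
  show parF (TC_isIncTree hreach) = P
  funext v
  by_cases hv : v = idxMin n (hC hreach)
  · rw [hv, parF_root, hidx]
    exact hfix.symm
  · have hvr : v ≠ r := by rwa [hidx] at hv
    refine (parF_unique (TC_isIncTree hreach) hv ⟨?_, ?_⟩).symm
    · exact (TC_adj hreach).mpr (Or.inl ⟨rfl, hvr⟩)
    · exact cent_parent_lt hreach hvr

noncomputable def incEquiv (n : ℕ) : IncSig n ≃ RTP n :=
  Equiv.ofBijective _ ⟨toRTP_inj, toRTP_surj⟩

instance : Finite (IncSig n) := Finite.of_equiv _ (incEquiv n).symm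

theorem main_sum (n : ℕ) :
    ∑ᶠ h : Fin n → ℤ,
      (Finset.univ.filter (fun T : SimpleGraph (Fin (n + 1)) => IsIncTree n h T)).card
    = Fintype.card (RTP n) := by
  classical
  haveI : Fintype (IncSig n) := Fintype.ofFinite _
  set F : (Fin n → ℤ) → ℕ := fun h =>
    (Finset.univ.filter (fun T : SimpleGraph (Fin (n + 1)) => IsIncTree n h T)).card with hF
  set s : Finset (Fin n → ℤ) := Finset.univ.image (fun x : IncSig n => x.1) with hs
  have hsupp : Function.support F ⊆ ↑s := by
    intro h hh
    rw [Function.mem_support] at hh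
    obtain ⟨T, hTmem⟩ := Finset.card_pos.mp (Nat.pos_of_ne_zero hh)
    have hTinc : IsIncTree n h T := (Finset.mem_filter.mp hTmem).2
    exact Finset.mem_coe.mpr (Finset.mem_image.mpr ⟨⟨h, T, hTinc⟩, Finset.mem_univ _, rfl⟩)
  rw [finsum_eq_sum_of_support_subset F hsupp]
  have hfiber : ∀ h ∈ s, (Finset.univ.filter (fun x : IncSig n => x.1 = h)).card = F h := by
    intro h _
    apply Finset.card_bij (fun x _ => x.2.1)
    · intro x hx
      rw [Finset.mem_filter] at hx ⊢
      refine ⟨Finset.mem_univ _, ?_⟩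
      rw [← hx.2]
      exact x.2.2
    · rintro ⟨hx, Tx, hTx⟩ hxm ⟨hy, Ty, hTy⟩ hym hxy
      replace hxm := Finset.mem_filter.mp hxm
      replace hym := Finset.mem_filter.mp hym
      have h1 : hx = h := hxm.2
      have h2 : hy = h := hym.2
      subst h1
      subst h2
      simp only at hxy
      subst hxy
      rfl
    · intro T hT
      rw [Finset.mem_filter] at hT
      exact ⟨⟨h, T, hT.2⟩, Finset.mem_filter.mpr ⟨Finset.mem_univ _, rfl⟩, rfl⟩
  have hcount : Fintype.card (IncSig n) = ∑ h ∈ s, F h := by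
    rw [← Finset.card_univ]
    rw [Finset.card_eq_sum_card_fiberwise (f := fun x : IncSig n => x.1) (t := s)
      (fun x _ => Finset.mem_image.mpr ⟨x, Finset.mem_univ _, rfl⟩)]
    exact Finset.sum_congr rfl hfiber
  rw [← hcount]
  exact Fintype.card_congr (incEquiv n)

end Assemble

end Aux
end

/-- The sum over all `h ∈ ℤ^n` of the number of `h`-increasing trees on `{0, …, n}` equals
`(n+1)^n`, the number of rooted Cayley trees on `{0, …, n}`. -/
theorem sum_card_incTrees (n : ℕ) :
    ∑ᶠ h : Fin n → ℤ,
      (Finset.univ.filter (fun T : SimpleGraph (Fin (n + 1)) => IsIncTree n h T)).card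
    = (n + 1) ^ n :=
  (Aux.main_sum n).trans (Aux.card_RTP n)
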